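/- Saint-Venant operator applied to a gradient square tensor involves only second derivatives: Let U ⊆ ℝⁿ be open and f ∈ C³(U). Then for all indices, (W(∇f ⊗ ∇f))_{i₁i₂j₁j₂} = 2( ∂²_{i₁j₂}f · ∂²_{i₂j₁}f − ∂²_{i₁i₂}f · ∂²_{j₁j₂}f ); in particular all third-order derivatives of f cancel, and the full trace satisfies ∑_{i,j=1}^{n} (W(∇f ⊗ ∇f))_{iijj} = 2( |∇²f|² − (Δf)² ), where |∇²f|² = ∑_{i,j} (∂²_{ij}f)² is the squared Frobenius norm of the Hessian. -/

import Mathlib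

noncomputable section

/-- `i`-th coordinate unit vector of `ℝⁿ`. -/
def en (n : ℕ) (i : Fin n) : EuclideanSpace ℝ (Fin n) := EuclideanSpace.single i 1

/-- First partial derivative `∂f/∂x_i` at `x`. -/
def pd (n : ℕ) (f : EuclideanSpace ℝ (Fin n) → ℝ) (x : EuclideanSpace ℝ (Fin n))
    (i : Fin n) : ℝ :=
  fderiv ℝ f x (en n i)

/-- Second partial derivative `∂²f/∂x_i ∂x_j` at `x`. -/
def pd2 (n : ℕ) (f : EuclideanSpace ℝ (Fin n) → ℝ) (x : EuclideanSpace ℝ (Fin n))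
    (i j : Fin n) : ℝ :=
  pd n (fun y => pd n f y j) x i

/-- The Saint-Venant operator applied to a 2-tensor field `B`:
`(WB)_{i₁i₂j₁j₂} = ∂²_{i₁i₂}B_{j₁j₂} + ∂²_{j₁j₂}B_{i₁i₂} − ∂²_{i₂j₁}B_{i₁j₂} − ∂²_{i₁j₂}B_{i₂j₁}`. -/
def saintVenant (n : ℕ) (B : EuclideanSpace ℝ (Fin n) → Fin n → Fin n → ℝ)
    (x : EuclideanSpace ℝ (Fin n)) (i₁ i₂ j₁ j₂ : Fin n) : ℝ :=
  pd2 n (fun y => B y j₁ j₂) x i₁ i₂ + pd2 n (fun y => B y i₁ i₂) x j₁ j₂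
    - pd2 n (fun y => B y i₁ j₂) x i₂ j₁ - pd2 n (fun y => B y i₂ j₁) x i₁ j₂

section Helpers

variable {n : ℕ} {f g h : EuclideanSpace ℝ (Fin n) → ℝ} {x : EuclideanSpace ℝ (Fin n)}

lemma pd_congr {i : Fin n} (he : g =ᶠ[nhds x] h) : pd n g x i = pd n h x i := by
  unfold pd; rw [he.fderiv_eq]

lemma pd_mul {i : Fin n} (hg : DifferentiableAt ℝ g x) (hh : DifferentiableAt ℝ h x) :
    pd n (fun y => g y * h y) x i = pd n g x i * h x + g x * pd n h x i := by
  unfold pd; rw [fderiv_fun_mul hg hh]; simp; ring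

lemma pd_add {i : Fin n} (hg : DifferentiableAt ℝ g x) (hh : DifferentiableAt ℝ h x) :
    pd n (fun y => g y + h y) x i = pd n g x i + pd n h x i := by
  unfold pd; rw [fderiv_fun_add hg hh]; simp

lemma pd2_eq_fderiv2 {i j : Fin n} (hd : DifferentiableAt ℝ (fderiv ℝ f) x) :
    pd2 n f x i j = fderiv ℝ (fderiv ℝ f) x (en n i) (en n j) := by
  unfold pd2 pd
  have hc : HasFDerivAt (fun y => fderiv ℝ f y (en n j))
      ((ContinuousLinearMap.apply ℝ ℝ (en n j)).comp (fderiv ℝ (fderiv ℝ f) x)) x :=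
    (ContinuousLinearMap.apply ℝ ℝ (en n j)).hasFDerivAt.comp x hd.hasFDerivAt
  rw [hc.fderiv]; rfl

lemma pd2_symm {i j : Fin n} (hx : ContDiffAt ℝ 2 f x) : pd2 n f x i j = pd2 n f x j i := by
  have hd : DifferentiableAt ℝ (fderiv ℝ f) x :=
    (hx.fderiv_right (m := 1) (by norm_num)).differentiableAt (by norm_num)
  rw [pd2_eq_fderiv2 hd, pd2_eq_fderiv2 hd, hx.isSymmSndFDerivAt (by norm_num)]

end Helpers

/-- The Saint-Venant operator applied to `∇f ⊗ ∇f` involves only second derivatives: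
`(W(∇f⊗∇f))_{i₁i₂j₁j₂} = 2(∂²_{i₁j₂}f ∂²_{i₂j₁}f − ∂²_{i₁i₂}f ∂²_{j₁j₂}f)`, and its full
trace equals `2(|∇²f|² − (Δf)²)`. -/
theorem saintVenant_gradient_square
    (n : ℕ) (U : Set (EuclideanSpace ℝ (Fin n))) (hU : IsOpen U)
    (f : EuclideanSpace ℝ (Fin n) → ℝ) (hf : ContDiffOn ℝ 3 f U) :
    ∀ x ∈ U,
      (∀ i₁ i₂ j₁ j₂ : Fin n,
        saintVenant n (fun y i j => pd n f y i * pd n f y j) x i₁ i₂ j₁ j₂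
          = 2 * (pd2 n f x i₁ j₂ * pd2 n f x i₂ j₁ - pd2 n f x i₁ i₂ * pd2 n f x j₁ j₂))
      ∧ ∑ i, ∑ j, saintVenant n (fun y i j => pd n f y i * pd n f y j) x i i j j
          = 2 * ((∑ i, ∑ j, (pd2 n f x i j) ^ 2) - (∑ i, pd2 n f x i i) ^ 2) := by
  -- regularity infrastructure
  have hfd : ContDiffOn ℝ 2 (fun y => fderiv ℝ f y) U := hf.fderiv_of_isOpen hU (by norm_num)
  have hg : ∀ b : Fin n, ContDiffOn ℝ 2 (fun y => pd n f y b) U := fun b =>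
    (ContinuousLinearMap.apply ℝ ℝ (en n b)).contDiff.comp_contDiffOn hfd
  have hG : ∀ d a : Fin n, ContDiffOn ℝ 1 (fun y => pd2 n f y d a) U := fun d a => by
    have h1 : ContDiffOn ℝ 1 (fun y => fderiv ℝ (fun z => pd n f z a) y) U :=
      (hg a).fderiv_of_isOpen hU (by norm_num)
    exact (ContinuousLinearMap.apply ℝ ℝ (en n d)).contDiff.comp_contDiffOn h1
  have hgd : ∀ b : Fin n, ∀ y ∈ U, DifferentiableAt ℝ (fun z => pd n f z b) y := fun b y hy =>
    (((hg b).differentiableOn (by norm_num)).differentiableAt (hU.mem_nhds hy))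
  have hGd : ∀ d a : Fin n, ∀ y ∈ U, DifferentiableAt ℝ (fun z => pd2 n f z d a) y :=
    fun d a y hy => (((hG d a).differentiableOn (by norm_num)).differentiableAt (hU.mem_nhds hy))
  intro x hx
  -- second-derivative symmetry on U
  have hqU : ∀ y ∈ U, ∀ i j : Fin n, pd2 n f y i j = pd2 n f y j i := fun y hy i j =>
    pd2_symm ((hf.contDiffAt (hU.mem_nhds hy)).of_le (by norm_num))
  have hq : ∀ i j : Fin n, pd2 n f x i j = pd2 n f x j i := hqU x hx
  -- the key product formula
  have key : ∀ a b c d : Fin n,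
      pd2 n (fun y => pd n f y a * pd n f y b) x c d
        = (pd n (fun y => pd2 n f y d a) x c * pd n f x b
            + pd2 n f x d a * pd2 n f x c b)
          + (pd2 n f x c a * pd2 n f x d b
            + pd n f x a * pd n (fun y => pd2 n f y d b) x c) := by
    intro a b c d
    have heq : (fun y => pd n (fun z => pd n f z a * pd n f z b) y d)
        =ᶠ[nhds x] (fun y => pd2 n f y d a * pd n f y b + pd n f y a * pd2 n f y d b) := by
      filter_upwards [hU.mem_nhds hx] with y hy
      exact pd_mul (hgd a y hy) (hgd b y hy)
    show pd n (fun y => pd n (fun z => pd n f z a * pd n f z b) y d) x c = _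
    rw [pd_congr heq,
      pd_add ((hGd d a x hx).fun_mul (hgd b x hx)) ((hgd a x hx).fun_mul (hGd d b x hx)),
      pd_mul (hGd d a x hx) (hgd b x hx), pd_mul (hgd a x hx) (hGd d b x hx)]
    rfl
  -- third-derivative symmetries
  have hT23 : ∀ c d a : Fin n,
      pd n (fun y => pd2 n f y d a) x c = pd n (fun y => pd2 n f y a d) x c := by
    intro c d a
    apply pd_congr
    filter_upwards [hU.mem_nhds hx] with y hy
    exact hqU y hy d a
  have hT12 : ∀ c d a : Fin n,
      pd n (fun y => pd2 n f y d a) x c = pd n (fun y => pd2 n f y c a) x d := by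
    intro c d a
    exact pd2_symm (f := fun z => pd n f z a) ((hg a).contDiffAt (hU.mem_nhds hx))
  have hpt : ∀ i₁ i₂ j₁ j₂ : Fin n,
      saintVenant n (fun y i j => pd n f y i * pd n f y j) x i₁ i₂ j₁ j₂
        = 2 * (pd2 n f x i₁ j₂ * pd2 n f x i₂ j₁ - pd2 n f x i₁ i₂ * pd2 n f x j₁ j₂) := by
    intro i₁ i₂ j₁ j₂
    have e1 : pd n (fun y => pd2 n f y i₂ j₁) x i₁ = pd n (fun y => pd2 n f y j₁ i₁) x i₂ := by
      rw [hT12 i₁ i₂ j₁, hT23 i₂ i₁ j₁]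
    have e2 : pd n (fun y => pd2 n f y i₂ j₂) x i₁ = pd n (fun y => pd2 n f y j₂ i₂) x i₁ := by
      rw [hT23 i₁ i₂ j₂]
    have e3 : pd n (fun y => pd2 n f y j₂ i₁) x j₁ = pd n (fun y => pd2 n f y j₂ j₁) x i₁ := by
      rw [hT23 j₁ j₂ i₁, hT12 j₁ i₁ j₂, hT23 i₁ j₁ j₂]
    have e4 : pd n (fun y => pd2 n f y j₂ i₂) x j₁ = pd n (fun y => pd2 n f y j₁ j₂) x i₂ := by
      rw [hT23 j₁ j₂ i₂, hT12 j₁ i₂ j₂, hT23 i₂ j₁ j₂]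
    simp only [saintVenant]
    rw [key j₁ j₂ i₁ i₂, key i₁ i₂ j₁ j₂, key i₁ j₂ i₂ j₁, key i₂ j₁ i₁ j₂]
    linear_combination pd n f x j₂ * e1 + pd n f x j₁ * e2 + pd n f x i₂ * e3
      + pd n f x i₁ * e4 + pd2 n f x j₁ i₂ * hq j₂ i₁ + pd2 n f x i₁ j₂ * hq j₁ i₂
      + (pd2 n f x j₂ i₂ - pd2 n f x i₂ j₂) * hq j₁ i₁
      - pd2 n f x j₁ j₂ * hq i₂ i₁ - pd2 n f x i₁ i₂ * hq j₂ j₁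
  refine ⟨hpt, ?_⟩
  have h2 : ∀ i j : Fin n,
      saintVenant n (fun y i j => pd n f y i * pd n f y j) x i i j j
        = 2 * ((pd2 n f x i j) ^ 2 - pd2 n f x i i * pd2 n f x j j) := by
    intro i j; rw [hpt i i j j]; ring
  simp only [h2]
  have expand : ∀ i j : Fin n,
      (2:ℝ) * ((pd2 n f x i j) ^ 2 - pd2 n f x i i * pd2 n f x j j)
        = 2 * (pd2 n f x i j * pd2 n f x i j) - 2 * (pd2 n f x i i * pd2 n f x j j) :=
    fun _ _ => by ring
  simp only [expand, Finset.sum_sub_distrib, mul_sub, Finset.mul_sum, sq, Finset.sum_mul_sum]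
  congr 1
  refine Finset.sum_congr rfl fun i _ => ?_
  rw [Finset.sum_mul, Finset.mul_sum]
  exact Finset.sum_congr rfl fun j _ => by ring
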